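/- arXiv:1804.07808 — 3 statements merged into one kernel-verified Lean document; each statement's English description precedes it below -/
import Mathlib

section
/- Let G be sampled from G(n,m,d1,d2) and set n_1 = m, n_2 = n. There exist constants C, c > 0 depending only on d1 and d2 such that the following holds: let H be a subgraph of the complete bipartite graph K_{n,m} with |E(H)| ≤ c·n edges, and let e be an edge of K_{n,m} not in H such that H and H ∪ {e} have the same number of connected components and e shares an endpoint with H whose degree in G is d_i (i.e., that endpoint lies in V_i). Then P( e ∈ E(G) | H ⊆ G ) ≤ (d_i − 1)/n_i + C·|E(H)|/n². -/
/-- The set of simple bipartite graphs on parts `Fin n` and `Fin m` in which every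
left vertex has degree `d1` and every right vertex has degree `d2`. -/
abbrev BBGraph (n m d1 d2 : ℕ) :=
  {E : Finset (Fin n × Fin m) //
    (∀ i : Fin n, (E.filter fun p => p.1 = i).card = d1) ∧
    (∀ j : Fin m, (E.filter fun p => p.2 = j).card = d2)}

/-- Conditional probability `P(p | q)` under the uniform distribution on a finite type. -/
noncomputable def CondPr {α : Type*} (p q : α → Prop) : ℝ :=
  (Nat.card {x : α // p x ∧ q x} : ℝ) / (Nat.card {x : α // q x} : ℝ)

/-- The simple graph on `Fin n ⊕ Fin m` associated with a bipartite edge set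
`E ⊆ Fin n × Fin m`. -/
def bipGraph {n m : ℕ} (E : Finset (Fin n × Fin m)) : SimpleGraph (Fin n ⊕ Fin m) where
  Adj u v := (∃ p ∈ E, u = Sum.inl p.1 ∧ v = Sum.inr p.2) ∨
    (∃ p ∈ E, u = Sum.inr p.2 ∧ v = Sum.inl p.1)
  symm := by
    constructor
    intro u v h
    rcases h with ⟨p, hp, rfl, rfl⟩ | ⟨p, hp, rfl, rfl⟩
    · exact Or.inr ⟨p, hp, rfl, rfl⟩
    · exact Or.inl ⟨p, hp, rfl, rfl⟩
  loopless := by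
    constructor
    intro u h
    rcases h with ⟨p, hp, rfl, h⟩ | ⟨p, hp, rfl, h⟩ <;> simp at h

/-- The number of connected components of the subgraph of `K_{n,m}` with edge set `H`
(components of isolated vertices, i.e. vertices not incident to any edge of `H`,
are not counted). -/
noncomputable def ccCount {n m : ℕ} (H : Finset (Fin n × Fin m)) : ℕ :=
  Nat.card (bipGraph H).ConnectedComponent -
    ((n + m) -
      (H.image (fun p => (Sum.inl p.1 : Fin n ⊕ Fin m)) ∪
        H.image (fun p => (Sum.inr p.2 : Fin n ⊕ Fin m))).card)

open Finset

section Switch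
variable {n m : ℕ}


/-- switchable edges -/
def Wset (H : Finset (Fin n × Fin m)) (a : Fin n) (b : Fin m) (E : Finset (Fin n × Fin m)) :
    Finset (Fin n × Fin m) :=
  E.filter (fun q => q.1 ≠ a ∧ q.2 ≠ b ∧ (a, q.2) ∉ E ∧ (q.1, b) ∉ E ∧ q ∉ H)

/-- the switched edge set -/
def swE (a x : Fin n) (b y : Fin m) (E : Finset (Fin n × Fin m)) : Finset (Fin n × Fin m) :=
  insert (a, y) (insert (x, b) ((E.erase (a, b)).erase (x, y)))

lemma mem_swE {a x : Fin n} {b y : Fin m} {E : Finset (Fin n × Fin m)} {p : Fin n × Fin m} :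
    p ∈ swE a x b y E ↔ p = (a, y) ∨ p = (x, b) ∨ (p ∈ E ∧ p ≠ (a, b) ∧ p ≠ (x, y)) := by
  simp only [swE, mem_insert, mem_erase]
  tauto

lemma card_edges {d1 : ℕ} {E : Finset (Fin n × Fin m)}
    (h : ∀ i : Fin n, (E.filter fun p => p.1 = i).card = d1) : E.card = n * d1 := by
  rw [Finset.card_eq_sum_card_fiberwise (f := Prod.fst) (t := univ) (fun x _ => mem_univ _)]
  simp [h, mul_comm]

lemma card_edges' {d2 : ℕ} {E : Finset (Fin n × Fin m)}
    (h : ∀ j : Fin m, (E.filter fun p => p.2 = j).card = d2) : E.card = m * d2 := by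
  rw [Finset.card_eq_sum_card_fiberwise (f := Prod.snd) (t := univ) (fun x _ => mem_univ _)]
  simp [h, mul_comm]

lemma deg1_swE {a x : Fin n} {b y : Fin m} {E : Finset (Fin n × Fin m)}
    (hab : (a, b) ∈ E) (hxy : (x, y) ∈ E) (hay : (a, y) ∉ E) (hxb : (x, b) ∉ E)
    (hxa : x ≠ a) (hyb : y ≠ b) (i : Fin n) :
    ((swE a x b y E).filter fun p => p.1 = i).card = (E.filter fun p => p.1 = i).card := by
  rcases eq_or_ne a i with rfl | hia
  · have h1 : ((swE a x b y E).filter fun p => p.1 = a) =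
        insert (a, y) ((E.filter fun p => p.1 = a).erase (a, b)) := by
      ext q
      simp only [mem_filter, mem_swE, mem_insert, mem_erase]
      constructor
      · rintro ⟨(rfl | rfl | ⟨hq, h1, h2⟩), hq1⟩
        · exact Or.inl rfl
        · exact absurd hq1 hxa
        · exact Or.inr ⟨h1, hq, hq1⟩
      · rintro (rfl | ⟨h1, hq, hq1⟩)
        · exact ⟨Or.inl rfl, rfl⟩
        · refine ⟨Or.inr (Or.inr ⟨hq, h1, ?_⟩), hq1⟩
          rintro rfl; exact hxa hq1
    rw [h1, card_insert_of_notMem (by simp [hay]), card_erase_of_mem (by simp [hab]),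
      Nat.sub_add_cancel (card_pos.mpr ⟨(a, b), by simp [hab]⟩)]
  rcases eq_or_ne x i with rfl | hix
  · have h1 : ((swE a x b y E).filter fun p => p.1 = x) =
        insert (x, b) ((E.filter fun p => p.1 = x).erase (x, y)) := by
      ext q
      simp only [mem_filter, mem_swE, mem_insert, mem_erase]
      constructor
      · rintro ⟨(rfl | rfl | ⟨hq, h1, h2⟩), hq1⟩
        · exact absurd hq1.symm hxa
        · exact Or.inl rfl
        · exact Or.inr ⟨h2, hq, hq1⟩
      · rintro (rfl | ⟨h2, hq, hq1⟩)
        · exact ⟨Or.inr (Or.inl rfl), rfl⟩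
        · refine ⟨Or.inr (Or.inr ⟨hq, ?_, h2⟩), hq1⟩
          rintro rfl; exact hxa hq1.symm
    rw [h1, card_insert_of_notMem (by simp [hxb]), card_erase_of_mem (by simp [hxy]),
      Nat.sub_add_cancel (card_pos.mpr ⟨(x, y), by simp [hxy]⟩)]
  · congr 1
    ext q
    simp only [mem_filter, mem_swE]
    constructor
    · rintro ⟨(rfl | rfl | ⟨hq, _, _⟩), hq1⟩
      · exact absurd hq1 hia
      · exact absurd hq1 hix
      · exact ⟨hq, hq1⟩
    · rintro ⟨hq, hq1⟩
      refine ⟨Or.inr (Or.inr ⟨hq, ?_, ?_⟩), hq1⟩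
      · rintro rfl; exact hia hq1
      · rintro rfl; exact hix hq1

lemma deg2_swE {a x : Fin n} {b y : Fin m} {E : Finset (Fin n × Fin m)}
    (hab : (a, b) ∈ E) (hxy : (x, y) ∈ E) (hay : (a, y) ∉ E) (hxb : (x, b) ∉ E)
    (hxa : x ≠ a) (hyb : y ≠ b) (j : Fin m) :
    ((swE a x b y E).filter fun p => p.2 = j).card = (E.filter fun p => p.2 = j).card := by
  rcases eq_or_ne b j with rfl | hjb
  · have h1 : ((swE a x b y E).filter fun p => p.2 = b) =
        insert (x, b) ((E.filter fun p => p.2 = b).erase (a, b)) := by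
      ext q
      simp only [mem_filter, mem_swE, mem_insert, mem_erase]
      constructor
      · rintro ⟨(rfl | rfl | ⟨hq, h1, h2⟩), hq2⟩
        · exact absurd hq2 hyb
        · exact Or.inl rfl
        · exact Or.inr ⟨h1, hq, hq2⟩
      · rintro (rfl | ⟨h1, hq, hq2⟩)
        · exact ⟨Or.inr (Or.inl rfl), rfl⟩
        · refine ⟨Or.inr (Or.inr ⟨hq, h1, ?_⟩), hq2⟩
          rintro rfl; exact hyb hq2
    rw [h1, card_insert_of_notMem (by simp [hxb]), card_erase_of_mem (by simp [hab]),
      Nat.sub_add_cancel (card_pos.mpr ⟨(a, b), by simp [hab]⟩)]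
  rcases eq_or_ne y j with rfl | hjy
  · have h1 : ((swE a x b y E).filter fun p => p.2 = y) =
        insert (a, y) ((E.filter fun p => p.2 = y).erase (x, y)) := by
      ext q
      simp only [mem_filter, mem_swE, mem_insert, mem_erase]
      constructor
      · rintro ⟨(rfl | rfl | ⟨hq, h1, h2⟩), hq2⟩
        · exact Or.inl rfl
        · exact absurd hq2.symm hyb
        · exact Or.inr ⟨h2, hq, hq2⟩
      · rintro (rfl | ⟨h2, hq, hq2⟩)
        · exact ⟨Or.inl rfl, rfl⟩
        · refine ⟨Or.inr (Or.inr ⟨hq, ?_, h2⟩), hq2⟩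
          rintro rfl; exact hyb hq2.symm
    rw [h1, card_insert_of_notMem (by simp [hay]), card_erase_of_mem (by simp [hxy]),
      Nat.sub_add_cancel (card_pos.mpr ⟨(x, y), by simp [hxy]⟩)]
  · congr 1
    ext q
    simp only [mem_filter, mem_swE]
    constructor
    · rintro ⟨(rfl | rfl | ⟨hq, _, _⟩), hq2⟩
      · exact absurd hq2 hjy
      · exact absurd hq2 hjb
      · exact ⟨hq, hq2⟩
    · rintro ⟨hq, hq2⟩
      refine ⟨Or.inr (Or.inr ⟨hq, ?_, ?_⟩), hq2⟩
      · rintro rfl; exact hjb hq2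
      · rintro rfl; exact hjy hq2

end Switch

section Wbound
variable {n m d1 d2 : ℕ}

lemma W_lower {H E : Finset (Fin n × Fin m)} {a : Fin n} {b : Fin m}
    (hG1 : ∀ i : Fin n, (E.filter fun p => p.1 = i).card = d1)
    (hG2 : ∀ j : Fin m, (E.filter fun p => p.2 = j).card = d2) :
    n * d1 ≤ (Wset H a b E).card + (d1 + d2 + d1 * d2 + d1 * d2 + H.card) := by
  classical
  set B1 := E.filter (fun q => q.1 = a) with hB1
  set B2 := E.filter (fun q => q.2 = b) with hB2
  set B3 := E.filter (fun q => (a, q.2) ∈ E) with hB3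
  set B4 := E.filter (fun q => (q.1, b) ∈ E) with hB4
  have hsub : E ⊆ Wset H a b E ∪ B1 ∪ B2 ∪ B3 ∪ B4 ∪ H := by
    intro q hq
    simp only [Wset, mem_union, mem_filter, hB1, hB2, hB3, hB4]
    by_cases h1 : q.1 = a
    · tauto
    by_cases h2 : q.2 = b
    · tauto
    by_cases h3 : (a, q.2) ∈ E
    · tauto
    by_cases h4 : (q.1, b) ∈ E
    · tauto
    by_cases h5 : q ∈ H
    · tauto
    · tauto
  have hcard : E.card ≤ (Wset H a b E).card + B1.card + B2.card + B3.card + B4.card + H.card :=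
    le_trans (card_le_card hsub) (by
      calc (Wset H a b E ∪ B1 ∪ B2 ∪ B3 ∪ B4 ∪ H).card
          ≤ (Wset H a b E ∪ B1 ∪ B2 ∪ B3 ∪ B4).card + H.card := card_union_le _ _
        _ ≤ (Wset H a b E ∪ B1 ∪ B2 ∪ B3).card + B4.card + H.card := by
            gcongr; exact card_union_le _ _
        _ ≤ (Wset H a b E ∪ B1 ∪ B2).card + B3.card + B4.card + H.card := by
            gcongr; exact card_union_le _ _
        _ ≤ (Wset H a b E ∪ B1).card + B2.card + B3.card + B4.card + H.card := by
            gcongr; exact card_union_le _ _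
        _ ≤ (Wset H a b E).card + B1.card + B2.card + B3.card + B4.card + H.card := by
            gcongr; exact card_union_le _ _)
  have h1 : B1.card = d1 := hG1 a
  have h2 : B2.card = d2 := hG2 b
  have h3 : B3.card ≤ d1 * d2 := by
    have hsub3 : B3 ⊆ ((E.filter (fun p => p.1 = a)).image Prod.snd).biUnion
        (fun y => E.filter (fun q => q.2 = y)) := by
      intro q hq
      simp only [hB3, mem_filter] at hq
      simp only [mem_biUnion, mem_image, mem_filter]
      exact ⟨q.2, ⟨(a, q.2), ⟨hq.2, rfl⟩, rfl⟩, hq.1, rfl⟩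
    calc B3.card ≤ ∑ y ∈ (E.filter (fun p => p.1 = a)).image Prod.snd,
          (E.filter (fun q => q.2 = y)).card := le_trans (card_le_card hsub3) (card_biUnion_le)
      _ = ∑ y ∈ (E.filter (fun p => p.1 = a)).image Prod.snd, d2 := by
          exact Finset.sum_congr rfl (fun y _ => hG2 y)
      _ ≤ d1 * d2 := by
          rw [Finset.sum_const, smul_eq_mul]
          exact Nat.mul_le_mul_right _ (le_trans card_image_le (le_of_eq (hG1 a)))
  have h4 : B4.card ≤ d1 * d2 := by
    have hsub4 : B4 ⊆ ((E.filter (fun p => p.2 = b)).image Prod.fst).biUnion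
        (fun x => E.filter (fun q => q.1 = x)) := by
      intro q hq
      simp only [hB4, mem_filter] at hq
      simp only [mem_biUnion, mem_image, mem_filter]
      exact ⟨q.1, ⟨(q.1, b), ⟨hq.2, rfl⟩, rfl⟩, hq.1, rfl⟩
    calc B4.card ≤ ∑ x ∈ (E.filter (fun p => p.2 = b)).image Prod.fst,
          (E.filter (fun q => q.1 = x)).card := le_trans (card_le_card hsub4) (card_biUnion_le)
      _ = ∑ x ∈ (E.filter (fun p => p.2 = b)).image Prod.fst, d1 := by
          exact Finset.sum_congr rfl (fun x _ => hG1 x)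
      _ ≤ d2 * d1 := by
          rw [Finset.sum_const, smul_eq_mul]
          exact Nat.mul_le_mul_right _ (le_trans card_image_le (le_of_eq (hG2 b)))
      _ = d1 * d2 := Nat.mul_comm _ _
  have := card_edges hG1
  omega

end Wbound

section Count
variable {n m : ℕ}

lemma swE_recover {a x : Fin n} {b y : Fin m} {E : Finset (Fin n × Fin m)}
    (hab : (a, b) ∈ E) (hxy : (x, y) ∈ E) (hay : (a, y) ∉ E) (hxb : (x, b) ∉ E)
    (hxa : x ≠ a) (hyb : y ≠ b) :
    insert (a, b) (insert (x, y) (((swE a x b y E).erase (a, y)).erase (x, b))) = E := by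
  ext p
  simp only [mem_insert, mem_erase, mem_swE]
  constructor
  · rintro (rfl | rfl | ⟨h1, h2, (rfl | rfl | ⟨hp, _, _⟩)⟩)
    · exact hab
    · exact hxy
    · exact absurd rfl h2
    · exact absurd rfl h1
    · exact hp
  · intro hp
    by_cases h1 : p = (a, b)
    · exact Or.inl h1
    by_cases h2 : p = (x, y)
    · exact Or.inr (Or.inl h2)
    · refine Or.inr (Or.inr ⟨?_, ?_, Or.inr (Or.inr ⟨hp, h1, h2⟩)⟩)
      · rintro rfl; exact hxb hp
      · rintro rfl; exact hay hp

variable {d1 d2 : ℕ}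

/-- the "backward" data recorded for a switched graph -/
def Back (H : Finset (Fin n × Fin m)) (a : Fin n) (b : Fin m) (E : Finset (Fin n × Fin m)) :
    Finset (Fin m × Fin n) :=
  ((E.filter (fun p => p.1 = a ∧ p ∉ H)).image Prod.snd) ×ˢ
    ((E.filter (fun p => p.2 = b ∧ p ∉ H)).image Prod.fst)

lemma count_key (H : Finset (Fin n × Fin m)) (a : Fin n) (b : Fin m)
    (hab : (a, b) ∉ H) (L D : ℕ)
    (hL : ∀ G : BBGraph n m d1 d2, (a, b) ∈ G.1 → H ⊆ G.1 → L ≤ (Wset H a b G.1).card)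
    (hD : ∀ G : BBGraph n m d1 d2, H ⊆ G.1 → (Back H a b G.1).card ≤ D) :
    (univ.filter fun G : BBGraph n m d1 d2 => (a, b) ∈ G.1 ∧ H ⊆ G.1).card * L ≤
      (univ.filter fun G : BBGraph n m d1 d2 => H ⊆ G.1).card * D := by
  classical
  set A := univ.filter fun G : BBGraph n m d1 d2 => (a, b) ∈ G.1 ∧ H ⊆ G.1 with hA
  set B := univ.filter fun G : BBGraph n m d1 d2 => H ⊆ G.1 with hB
  -- the switching map
  have key : ∀ (G : BBGraph n m d1 d2) (q : Fin n × Fin m), (a, b) ∈ G.1 →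
      q ∈ Wset H a b G.1 →
      (∀ i : Fin n, ((swE a q.1 b q.2 G.1).filter fun p => p.1 = i).card = d1) ∧
      (∀ j : Fin m, ((swE a q.1 b q.2 G.1).filter fun p => p.2 = j).card = d2) := by
    intro G q hG hq
    simp only [Wset, mem_filter] at hq
    obtain ⟨hqE, h1, h2, h3, h4, h5⟩ := hq
    exact ⟨fun i => (deg1_swE hG (by rw [Prod.mk.eta]; exact hqE) h3 h4 h1 h2 i).trans (G.2.1 i),
      fun j => (deg2_swE hG (by rw [Prod.mk.eta]; exact hqE) h3 h4 h1 h2 j).trans (G.2.2 j)⟩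
  let f : (Σ _ : BBGraph n m d1 d2, Fin n × Fin m) → Σ _ : BBGraph n m d1 d2, Fin m × Fin n :=
    fun P =>
      if h : (a, b) ∈ P.1.1 ∧ P.2 ∈ Wset H a b P.1.1 then
        ⟨⟨swE a P.2.1 b P.2.2 P.1.1, key P.1 P.2 h.1 h.2⟩, (P.2.2, P.2.1)⟩
      else ⟨P.1, (P.2.2, P.2.1)⟩
  calc A.card * L = ∑ _G ∈ A, L := by rw [Finset.sum_const, smul_eq_mul]
    _ ≤ ∑ G ∈ A, (Wset H a b G.1).card := by
        refine Finset.sum_le_sum (fun G hG => ?_)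
        rw [hA, mem_filter] at hG
        exact hL G hG.2.1 hG.2.2
    _ = (A.sigma (fun G => Wset H a b G.1)).card := (card_sigma _ _).symm
    _ ≤ (B.sigma (fun G => Back H a b G.1)).card := by
        refine card_le_card_of_injOn f ?_ ?_
        · rintro ⟨G, q⟩ hP
          simp only [mem_coe, mem_sigma, hA, mem_filter, mem_univ, true_and] at hP
          obtain ⟨⟨hGab, hGH⟩, hqW⟩ := hP
          have hcond : (a, b) ∈ G.1 ∧ q ∈ Wset H a b G.1 := ⟨hGab, hqW⟩
          simp only [f, dif_pos hcond]
          simp only [Wset, mem_filter] at hqW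
          obtain ⟨hqE, h1, h2, h3, h4, h5⟩ := hqW
          simp only [mem_coe, mem_sigma, hB, mem_filter, mem_univ, true_and]
          constructor
          · intro p hp
            rw [mem_swE]
            refine Or.inr (Or.inr ⟨hGH hp, ?_, ?_⟩)
            · rintro rfl; exact hab hp
            · rintro rfl; exact h5 hp
          · simp only [Back, mem_product, mem_image, mem_filter]
            constructor
            · refine ⟨(a, q.2), ⟨?_, rfl, ?_⟩, rfl⟩
              · rw [mem_swE]; exact Or.inl rfl
              · intro hmem; exact h3 (hGH hmem)
            · refine ⟨(q.1, b), ⟨?_, rfl, ?_⟩, rfl⟩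
              · rw [mem_swE]; exact Or.inr (Or.inl rfl)
              · intro hmem; exact h4 (hGH hmem)
        · rintro ⟨G, q⟩ hP ⟨G', q'⟩ hP' hfeq
          simp only [coe_sigma, Set.mem_sigma_iff, mem_coe, mem_sigma] at hP hP'
          simp only [hA, mem_filter, mem_univ, true_and] at hP hP'
          obtain ⟨⟨hGab, hGH⟩, hqW⟩ := hP
          obtain ⟨⟨hGab', hGH'⟩, hqW'⟩ := hP'
          have hc : (a, b) ∈ G.1 ∧ q ∈ Wset H a b G.1 := ⟨hGab, hqW⟩
          have hc' : (a, b) ∈ G'.1 ∧ q' ∈ Wset H a b G'.1 := ⟨hGab', hqW'⟩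
          simp only [f, dif_pos hc, dif_pos hc', Sigma.mk.inj_iff] at hfeq
          obtain ⟨hE, hpair⟩ := hfeq
          have hq2 : q.2 = q'.2 ∧ q.1 = q'.1 := by
            have := hpair
            rw [heq_eq_eq, Prod.mk.injEq] at this
            exact this
          obtain ⟨hq2a, hq2b⟩ := hq2
          have hqq' : q = q' := Prod.ext hq2b hq2a
          subst hqq'
          have hEE : swE a q.1 b q.2 G.1 = swE a q.1 b q.2 G'.1 := congrArg Subtype.val hE
          simp only [Wset, mem_filter] at hqW hqW'
          obtain ⟨hqE, h1, h2, h3, h4, h5⟩ := hqW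
          obtain ⟨hqE', h1', h2', h3', h4', h5'⟩ := hqW'
          have : G.1 = G'.1 := by
            rw [← swE_recover hGab (by rw [Prod.mk.eta]; exact hqE) h3 h4 h1 h2,
              ← swE_recover hGab' (by rw [Prod.mk.eta]; exact hqE') h3' h4' h1' h2', hEE]
          exact Sigma.ext (Subtype.ext this) (by rw [heq_eq_eq])
    _ = ∑ G ∈ B, (Back H a b G.1).card := card_sigma _ _
    _ ≤ ∑ G ∈ B, D := by
        refine Finset.sum_le_sum (fun G hG => ?_)
        rw [hB, mem_filter] at hG
        exact hD G hG.2
    _ = B.card * D := by rw [Finset.sum_const, smul_eq_mul]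

end Count

section BackBound
variable {n m d1 d2 : ℕ}

lemma back_fst_le {E H : Finset (Fin n × Fin m)} {a : Fin n}
    (hdeg : (E.filter fun p => p.1 = a).card = d1) :
    ((E.filter (fun p => p.1 = a ∧ p ∉ H)).image Prod.snd).card ≤ d1 :=
  le_trans card_image_le (le_trans (card_le_card
    (fun p hp => by simp only [mem_filter] at hp ⊢; exact ⟨hp.1, hp.2.1⟩)) hdeg.le)

lemma back_snd_le {E H : Finset (Fin n × Fin m)} {b : Fin m}
    (hdeg : (E.filter fun p => p.2 = b).card = d2) :
    ((E.filter (fun p => p.2 = b ∧ p ∉ H)).image Prod.fst).card ≤ d2 :=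
  le_trans card_image_le (le_trans (card_le_card
    (fun p hp => by simp only [mem_filter] at hp ⊢; exact ⟨hp.1, hp.2.1⟩)) hdeg.le)

lemma back_fst_lt {E H : Finset (Fin n × Fin m)} {a : Fin n}
    (hdeg : (E.filter fun p => p.1 = a).card = d1) (hH : H ⊆ E)
    (hex : ∃ p ∈ H, p.1 = a) :
    ((E.filter (fun p => p.1 = a ∧ p ∉ H)).image Prod.snd).card ≤ d1 - 1 := by
  obtain ⟨p0, hp0, hp0a⟩ := hex
  have hsub : E.filter (fun p => p.1 = a ∧ p ∉ H) ⊆ (E.filter fun p => p.1 = a).erase p0 := by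
    intro p hp
    simp only [mem_filter, mem_erase] at hp ⊢
    exact ⟨fun h => hp.2.2 (h ▸ hp0), hp.1, hp.2.1⟩
  refine le_trans card_image_le (le_trans (card_le_card hsub) ?_)
  rw [card_erase_of_mem (by simp only [mem_filter]; exact ⟨hH hp0, hp0a⟩), hdeg]

lemma back_snd_lt {E H : Finset (Fin n × Fin m)} {b : Fin m}
    (hdeg : (E.filter fun p => p.2 = b).card = d2) (hH : H ⊆ E)
    (hex : ∃ p ∈ H, p.2 = b) :
    ((E.filter (fun p => p.2 = b ∧ p ∉ H)).image Prod.fst).card ≤ d2 - 1 := by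
  obtain ⟨p0, hp0, hp0b⟩ := hex
  have hsub : E.filter (fun p => p.2 = b ∧ p ∉ H) ⊆ (E.filter fun p => p.2 = b).erase p0 := by
    intro p hp
    simp only [mem_filter, mem_erase] at hp ⊢
    exact ⟨fun h => hp.2.2 (h ▸ hp0), hp.1, hp.2.1⟩
  refine le_trans card_image_le (le_trans (card_le_card hsub) ?_)
  rw [card_erase_of_mem (by simp only [mem_filter]; exact ⟨hH hp0, hp0b⟩), hdeg]

end BackBound

set_option maxHeartbeats 2000000 in
/-- Lemma (edge probabilities given a subgraph, part (i)/(iii)): there are constants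
`C, c > 0` depending only on `d1, d2` such that for every subgraph `H` of `K_{n,m}` with
at most `c·n` edges and every edge `e = (a,b) ∉ H` such that `H` and `H ∪ {e}` have the
same number of connected components, if `e` shares the endpoint `a ∈ V₁` (of degree `d1`
in `G`) with `H`, then `P(e ∈ G | H ⊆ G) ≤ (d1−1)/m + C|E(H)|/n²`, and if it shares the
endpoint `b ∈ V₂` (of degree `d2` in `G`) with `H`, then
`P(e ∈ G | H ⊆ G) ≤ (d2−1)/n + C|E(H)|/n²`. -/
theorem edge_prob_given_subgraph (d1 d2 : ℕ) (hd1 : 0 < d1) (hd2 : 0 < d2) :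
    ∃ C > (0 : ℝ), ∃ c > (0 : ℝ), ∀ n m : ℕ, n * d1 = m * d2 →
      ∀ H : Finset (Fin n × Fin m), (H.card : ℝ) ≤ c * n →
      ∀ (a : Fin n) (b : Fin m), (a, b) ∉ H →
      ccCount (insert (a, b) H) = ccCount H →
      ((∃ p ∈ H, p.1 = a) →
        CondPr (fun G : BBGraph n m d1 d2 => (a, b) ∈ G.1) (fun G => H ⊆ G.1) ≤
          ((d1 : ℝ) - 1) / m + C * H.card / n ^ 2) ∧
      ((∃ p ∈ H, p.2 = b) →
        CondPr (fun G : BBGraph n m d1 d2 => (a, b) ∈ G.1) (fun G => H ⊆ G.1) ≤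
          ((d2 : ℝ) - 1) / n + C * H.card / n ^ 2) := by
  classical
  set K : ℕ := d1 + d2 + d1 * d2 + d1 * d2 with hK
  refine ⟨(2 * d1 * d2 * (K + 1) : ℝ), by positivity, (d1 : ℝ) / (4 * (K + 1)), by positivity,
    ?_⟩
  intro n m hnm H hHc a b hab _hcc
  -- the common part of the two cases
  have main : ∀ D : ℕ, (D : ℝ) ≤ d1 * d2 →
      (∀ G : BBGraph n m d1 d2, H ⊆ G.1 → (Back H a b G.1).card ≤ D) →
      H.Nonempty →
      CondPr (fun G : BBGraph n m d1 d2 => (a, b) ∈ G.1) (fun G => H ⊆ G.1) ≤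
        (D : ℝ) / (n * d1) + (2 * d1 * d2 * (K + 1) : ℝ) * H.card / n ^ 2 := by
    intro D hDle hD hne
    obtain ⟨p0, hp0⟩ := hne
    have hH1 : 1 ≤ H.card := card_pos.mpr ⟨p0, hp0⟩
    have hn : 0 < n := p0.1.pos
    -- convert the real hypothesis on H.card to a natural one
    have hnat : H.card * (4 * (K + 1)) ≤ n * d1 := by
      have h0 : (0 : ℝ) < 4 * (K + 1) := by positivity
      have h1 : (H.card : ℝ) * (4 * (K + 1)) ≤ (d1 : ℝ) * n := by
        have := mul_le_mul_of_nonneg_right hHc (le_of_lt h0)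
        calc (H.card : ℝ) * (4 * (K + 1)) ≤ (d1 : ℝ) / (4 * (K + 1)) * n * (4 * (K + 1)) :=
              this
          _ = (d1 : ℝ) * n := by field_simp
      have h2 : (H.card : ℝ) * (4 * ((K : ℝ) + 1)) ≤ (n : ℝ) * d1 := by push_cast at h1 ⊢; linarith
      exact_mod_cast h2
    have h4K : 4 * (K + 1) ≤ n * d1 := le_trans (Nat.le_mul_of_pos_left _ hH1) hnat
    have h4H : 4 * H.card ≤ n * d1 := by
      refine le_trans ?_ hnat
      have : 4 ≤ 4 * (K + 1) := by omega
      calc 4 * H.card ≤ 4 * (K + 1) * H.card := Nat.mul_le_mul_right _ this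
        _ = H.card * (4 * (K + 1)) := Nat.mul_comm _ _
    set L : ℕ := n * d1 - (K + H.card) with hL
    have hLpos : 0 < L := by omega
    have hL2 : n * d1 ≤ 2 * L := by omega
    have hKH : K + H.card ≤ n * d1 := by omega
    -- the counting inequality
    have hLlow : ∀ G : BBGraph n m d1 d2, (a, b) ∈ G.1 → H ⊆ G.1 →
        L ≤ (Wset H a b G.1).card := by
      intro G h1 _h2
      have := W_lower (H := H) (a := a) (b := b) G.2.1 G.2.2
      omega
    have count := count_key (d1 := d1) (d2 := d2) H a b hab L D hLlow hD
    -- express CondPr with finset cards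
    have hAcard : Nat.card {G : BBGraph n m d1 d2 // (a, b) ∈ G.1 ∧ H ⊆ G.1} =
        (univ.filter fun G : BBGraph n m d1 d2 => (a, b) ∈ G.1 ∧ H ⊆ G.1).card := by
      rw [Nat.card_eq_fintype_card, Fintype.card_subtype]
    have hBcard : Nat.card {G : BBGraph n m d1 d2 // H ⊆ G.1} =
        (univ.filter fun G : BBGraph n m d1 d2 => H ⊆ G.1).card := by
      rw [Nat.card_eq_fintype_card, Fintype.card_subtype]
    set cA := (univ.filter fun G : BBGraph n m d1 d2 => (a, b) ∈ G.1 ∧ H ⊆ G.1).card with hcA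
    set cB := (univ.filter fun G : BBGraph n m d1 d2 => H ⊆ G.1).card with hcB
    have hCond : CondPr (fun G : BBGraph n m d1 d2 => (a, b) ∈ G.1) (fun G => H ⊆ G.1) =
        (cA : ℝ) / (cB : ℝ) := by
      rw [CondPr, hAcard, hBcard]
    rw [hCond]
    have hrhs0 : (0 : ℝ) ≤ (D : ℝ) / (n * d1) + (2 * d1 * d2 * (K + 1) : ℝ) * H.card / n ^ 2 := by
      positivity
    rcases Nat.eq_zero_or_pos cB with hB0 | hBpos
    · have hA0 : cA = 0 := by
        refine Nat.eq_zero_of_le_zero (le_trans ?_ (le_of_eq hB0))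
        exact card_le_card (Finset.monotone_filter_right univ (fun G _ hG => hG.2))
      rw [hA0, hB0]
      simpa using hrhs0
    -- main estimate
    have hstep1 : (cA : ℝ) / cB ≤ (D : ℝ) / L := by
      rw [div_le_div_iff₀ (by exact_mod_cast hBpos) (by exact_mod_cast hLpos)]
      have h2 : cA * L ≤ D * cB := by rw [Nat.mul_comm D cB]; exact count
      exact_mod_cast h2
    refine le_trans hstep1 ?_
    -- real versions
    have hNL : (L : ℝ) = (n : ℝ) * d1 - (K + H.card) := by
      rw [hL]
      push_cast [Nat.cast_sub hKH]
      ring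
    have hNpos : (0 : ℝ) < (n : ℝ) * d1 := by positivity
    have hLrpos : (0 : ℝ) < (L : ℝ) := by exact_mod_cast hLpos
    have hL2r : (n : ℝ) * d1 ≤ 2 * L := by exact_mod_cast hL2
    have hnN : (n : ℝ) ≤ (n : ℝ) * d1 := by
      nlinarith [(Nat.one_le_cast (α := ℝ)).mpr hd1, Nat.cast_nonneg (α := ℝ) n]
    have hsq : ((n : ℝ)) ^ 2 ≤ 2 * ((L : ℝ) * ((n : ℝ) * d1)) := by nlinarith
    have hKh : (K : ℝ) + H.card ≤ (K + 1 : ℝ) * H.card := by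
      have h1 : (1 : ℝ) ≤ H.card := by exact_mod_cast hH1
      nlinarith [Nat.cast_nonneg (α := ℝ) K]
    have hL0 : (L : ℝ) ≠ 0 := ne_of_gt hLrpos
    have hN0 : ((n : ℝ) * d1) ≠ 0 := ne_of_gt hNpos
    have hsub : (n : ℝ) * d1 - (L : ℝ) = (K : ℝ) + H.card := by rw [hNL]; ring
    have hsplit : (D : ℝ) / L - (D : ℝ) / ((n : ℝ) * d1) =
        (D : ℝ) * ((K : ℝ) + H.card) / ((L : ℝ) * ((n : ℝ) * d1)) := by
      rw [← hsub]
      field_simp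
    have hfrac : (D : ℝ) * ((K : ℝ) + H.card) / ((L : ℝ) * ((n : ℝ) * d1)) ≤
        (2 * d1 * d2 * (K + 1) : ℝ) * H.card / n ^ 2 := by
      rw [div_le_div_iff₀ (by positivity) (by positivity)]
      have hD0 : (0 : ℝ) ≤ (D : ℝ) := Nat.cast_nonneg _
      have hH0 : (0 : ℝ) ≤ (H.card : ℝ) := Nat.cast_nonneg _
      have hKh0 : (0 : ℝ) ≤ (K : ℝ) + H.card := by positivity
      calc (D : ℝ) * ((K : ℝ) + H.card) * (n : ℝ) ^ 2
          ≤ ((d1 : ℝ) * d2) * ((K + 1 : ℝ) * H.card) * (n : ℝ) ^ 2 := by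
            apply mul_le_mul_of_nonneg_right _ (by positivity)
            exact mul_le_mul hDle hKh hKh0 (by positivity)
        _ = ((d1 : ℝ) * d2 * (K + 1)) * H.card * (n : ℝ) ^ 2 := by ring
        _ ≤ ((d1 : ℝ) * d2 * (K + 1)) * H.card * (2 * ((L : ℝ) * ((n : ℝ) * d1))) := by
            apply mul_le_mul_of_nonneg_left hsq (by positivity)
        _ = (2 * d1 * d2 * (K + 1) : ℝ) * H.card * ((L : ℝ) * ((n : ℝ) * d1)) := by ring
    linarith [hsplit, hfrac]
  constructor
  · intro hex
    have hne : H.Nonempty := by obtain ⟨p, hp, _⟩ := hex; exact ⟨p, hp⟩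
    obtain ⟨p0, hp0⟩ := hne
    have hm : 0 < m := p0.2.pos
    have hn : 0 < n := p0.1.pos
    have hmain := main ((d1 - 1) * d2) (by
        push_cast [Nat.cast_sub hd1]
        nlinarith [Nat.cast_nonneg (α := ℝ) d2]) (fun G hG => by
        rw [Back, card_product]
        exact Nat.mul_le_mul (back_fst_lt (G.2.1 a) hG hex) (back_snd_le (G.2.2 b)))
      ⟨p0, hp0⟩
    refine le_trans hmain ?_
    have heq : (((d1 - 1) * d2 : ℕ) : ℝ) / ((n : ℝ) * d1) = ((d1 : ℝ) - 1) / m := by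
      rw [div_eq_div_iff (by positivity) (by exact_mod_cast hm.ne')]
      push_cast [Nat.cast_sub hd1]
      have hnm' : (n : ℝ) * d1 = (m : ℝ) * d2 := by exact_mod_cast hnm
      nlinarith [hnm']
    rw [heq]
  · intro hex
    have hne : H.Nonempty := by obtain ⟨p, hp, _⟩ := hex; exact ⟨p, hp⟩
    obtain ⟨p0, hp0⟩ := hne
    have hn : 0 < n := p0.1.pos
    have hmain := main (d1 * (d2 - 1)) (by
        push_cast [Nat.cast_sub hd2]
        nlinarith [Nat.cast_nonneg (α := ℝ) d1]) (fun G hG => by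
        rw [Back, card_product]
        exact Nat.mul_le_mul (back_fst_le (G.2.1 a)) (back_snd_lt (G.2.2 b) hG hex))
      ⟨p0, hp0⟩
    refine le_trans hmain ?_
    have heq : ((d1 * (d2 - 1) : ℕ) : ℝ) / ((n : ℝ) * d1) = ((d2 : ℝ) - 1) / n := by
      rw [div_eq_div_iff (by positivity) (by exact_mod_cast hn.ne')]
      push_cast [Nat.cast_sub hd2]
      ring
    rw [heq]
end

section
/- Let F be the edge set of a finite connected graph with maximum degree at most d, and let p2(F) be the number of two-paths in F (unordered pairs of distinct edges of F sharing a common vertex). Then there exists an ordering e_{π(1)}, e_{π(2)}, …, e_{π(|F|)} of the edges of F that contains at least ⌈ p2(F)/(6d²) ⌉ good edges, where edge e_{π(j)} is called good if there is exactly one index i ≤ j−1 such that e_{π(i)} shares a vertex with e_{π(j)}. -/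
open Finset

section Greedy
variable {α : Type*} [Fintype α] [DecidableEq α] (A : α → α → Prop) [DecidableRel A]

/-- Separation between two pairs: all four cross elements distinct and non-adjacent. -/
def GSep (p q : α × α) : Prop :=
  (¬ A p.1 q.1 ∧ ¬ A p.1 q.2 ∧ ¬ A p.2 q.1 ∧ ¬ A p.2 q.2) ∧
  (p.1 ≠ q.1 ∧ p.1 ≠ q.2 ∧ p.2 ≠ q.1 ∧ p.2 ≠ q.2)

def GC (e f : α) : Finset α := univ.filter (fun x => A x e ∨ A x f)

def GD (e f : α) : Finset (α × α) :=
  univ.filter (fun q => A q.1 q.2 ∧ (q.1 ∈ GC A e f ∨ q.2 ∈ GC A e f))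

lemma GD_card_le (hsymm : Symmetric A) (e f : α) (B : ℕ)
    (hB : ∀ g : α, (univ.filter (fun h => A g h)).card ≤ B) :
    (GD A e f).card ≤ 2 * ((GC A e f).card * B) := by
  set C := GC A e f with hC
  set D1 : Finset (α × α) := univ.filter (fun q => A q.1 q.2 ∧ q.1 ∈ C) with hD1
  set D2 : Finset (α × α) := univ.filter (fun q => A q.1 q.2 ∧ q.2 ∈ C) with hD2
  have hsub : GD A e f ⊆ D1 ∪ D2 := by
    intro q hq
    simp only [GD, mem_filter, mem_univ, true_and] at hq
    simp only [hD1, hD2, mem_union, mem_filter, mem_univ, true_and]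
    tauto
  have hD1card : D1.card ≤ C.card * B := by
    have hfib : D1.card = ∑ g ∈ C, (D1.filter (fun q => q.1 = g)).card := by
      apply card_eq_sum_card_fiberwise
      intro q hq
      simp only [hD1, mem_coe, mem_filter, mem_univ, true_and] at hq
      exact hq.2
    rw [hfib]
    calc ∑ g ∈ C, (D1.filter (fun q => q.1 = g)).card
        ≤ ∑ _g ∈ C, B := by
          apply Finset.sum_le_sum
          intro g _
          apply Finset.card_le_card_of_injOn (fun q => q.2) ?_ ?_ |>.trans (hB g)
          · intro q hq
            simp only [hD1, mem_coe, mem_filter, mem_univ, true_and] at hq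
            simp only [mem_coe, mem_filter, mem_univ, true_and]
            exact hq.2 ▸ hq.1.1
          · intro q hq r hr hqr
            simp only [coe_filter, Set.mem_setOf_eq, hD1, mem_filter, mem_univ, true_and] at hq hr
            exact Prod.ext (hq.2.trans hr.2.symm) hqr
      _ = C.card * B := by simp [mul_comm]
  have hD2card : D2.card = D1.card := by
    apply Finset.card_nbij' Prod.swap Prod.swap
    · intro q hq
      simp only [hD2, mem_coe, mem_filter, mem_univ, true_and] at hq
      simp only [hD1, mem_coe, mem_filter, mem_univ, true_and, Prod.fst_swap, Prod.snd_swap]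
      exact ⟨hsymm hq.1, hq.2⟩
    · intro q hq
      simp only [hD1, mem_coe, mem_filter, mem_univ, true_and] at hq
      simp only [hD2, mem_coe, mem_filter, mem_univ, true_and, Prod.fst_swap, Prod.snd_swap]
      exact ⟨hsymm hq.1, hq.2⟩
    · intro q _; simp
    · intro q _; simp
  calc (GD A e f).card ≤ (D1 ∪ D2).card := card_le_card hsub
    _ ≤ D1.card + D2.card := card_union_le _ _
    _ ≤ C.card * B + C.card * B := by omega
    _ = 2 * (C.card * B) := by ring

lemma greedy (hsymm : Symmetric A) (M : ℕ)
    (hM : ∀ e f, A e f → (GD A e f).card ≤ M)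
    (P : Finset (α × α)) (hP : ∀ q ∈ P, A q.1 q.2) :
    ∃ l : List (α × α), P.card ≤ M * l.length ∧ (∀ p ∈ l, A p.1 p.2) ∧
      List.Pairwise (GSep A) l ∧ (∀ p ∈ l, p ∈ P) := by
  rcases P.eq_empty_or_nonempty with h | ⟨q, hq⟩
  · exact ⟨[], by simp [h], by simp, by simp, by simp⟩
  · have hAq : A q.1 q.2 := hP q hq
    have hqC : q.1 ∈ GC A q.1 q.2 := by
      simp only [GC, mem_filter, mem_univ, true_and]; exact Or.inr hAq
    have hqD : q ∈ GD A q.1 q.2 := by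
      simp only [GD, mem_filter, mem_univ, true_and]; exact ⟨hAq, Or.inl hqC⟩
    have hlt : (P \ GD A q.1 q.2).card < P.card := by
      apply card_lt_card
      refine ⟨sdiff_subset, fun hsub => ?_⟩
      have := hsub hq
      simp [hqD] at this
    obtain ⟨l, hl1, hl2, hl3, hl4⟩ :=
      greedy hsymm M hM (P \ GD A q.1 q.2) (fun r hr => hP r (mem_sdiff.mp hr).1)
    refine ⟨q :: l, ?_, ?_, ?_, ?_⟩
    · have h1 : P.card ≤ (P \ GD A q.1 q.2).card + (GD A q.1 q.2).card :=
        card_le_card_sdiff_add_card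
      calc P.card ≤ (P \ GD A q.1 q.2).card + (GD A q.1 q.2).card := h1
        _ ≤ M * l.length + M := Nat.add_le_add hl1 (hM q.1 q.2 hAq)
        _ = M * (q :: l).length := by simp [List.length_cons]; ring
    · intro p hp
      rcases List.mem_cons.mp hp with h | h
      · exact h ▸ hAq
      · exact hl2 p h
    · refine List.pairwise_cons.mpr ⟨fun p hp => ?_, hl3⟩
      have hpP := hl4 p hp
      rw [mem_sdiff] at hpP
      obtain ⟨hpP1, hpD⟩ := hpP
      have hAp : A p.1 p.2 := hP p hpP1
      have hnC : p.1 ∉ GC A q.1 q.2 ∧ p.2 ∉ GC A q.1 q.2 := by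
        by_contra hc
        apply hpD
        simp only [GD, mem_filter, mem_univ, true_and]
        exact ⟨hAp, by tauto⟩
      obtain ⟨h1, h2⟩ := hnC
      simp only [GC, mem_filter, mem_univ, true_and, not_or] at h1 h2
      constructor
      · exact ⟨fun h => h1.1 (hsymm h), fun h => h2.1 (hsymm h),
          fun h => h1.2 (hsymm h), fun h => h2.2 (hsymm h)⟩
      · refine ⟨fun h => ?_, fun h => ?_, fun h => ?_, fun h => ?_⟩
        · exact h2.1 (hsymm (h ▸ hAp))
        · exact h1.1 (h ▸ hAp)
        · exact h2.2 (hsymm (h ▸ hAp))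
        · exact h1.2 (h ▸ hAp)
    · intro p hp
      rcases List.mem_cons.mp hp with h | h
      · exact h ▸ hq
      · exact (mem_sdiff.mp (hl4 p h)).1
termination_by P.card
decreasing_by exact hlt

end Greedy

section Lists
variable {α : Type*}

def flat : List (α × α) → List α
  | [] => []
  | p :: t => p.1 :: p.2 :: flat t

lemma flat_length (l : List (α × α)) : (flat l).length = 2 * l.length := by
  induction l with
  | nil => simp [flat]
  | cons p t ih => simp [flat, ih]; ring

lemma mem_flat {x : α} {l : List (α × α)} :
    x ∈ flat l ↔ ∃ p ∈ l, x = p.1 ∨ x = p.2 := by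
  induction l with
  | nil => simp [flat]
  | cons p t ih =>
    simp only [flat, List.mem_cons, ih]
    constructor
    · rintro (rfl | rfl | ⟨q, hq, h⟩)
      · exact ⟨p, Or.inl rfl, Or.inl rfl⟩
      · exact ⟨p, Or.inl rfl, Or.inr rfl⟩
      · exact ⟨q, Or.inr hq, h⟩
    · rintro ⟨q, (rfl | hq), h⟩
      · tauto
      · exact Or.inr (Or.inr ⟨q, hq, h⟩)

lemma flat_get_fst (l : List (α × α)) (i : ℕ) (hi : i < l.length) :
    (flat l)[2 * i]? = some (l[i].1) := by
  induction l generalizing i with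
  | nil => simp at hi
  | cons p t ih =>
    cases i with
    | zero => simp [flat]
    | succ i =>
      have h2 : 2 * (i + 1) = 2 * i + 1 + 1 := by ring
      rw [h2]
      simp only [flat, List.getElem?_cons_succ]
      rw [ih i (by simpa using Nat.lt_of_succ_lt_succ hi)]
      simp

lemma flat_get_snd (l : List (α × α)) (i : ℕ) (hi : i < l.length) :
    (flat l)[2 * i + 1]? = some (l[i].2) := by
  induction l generalizing i with
  | nil => simp at hi
  | cons p t ih =>
    cases i with
    | zero => simp [flat]
    | succ i =>
      have h2 : 2 * (i + 1) + 1 = 2 * i + 1 + 1 + 1 := by ring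
      rw [h2]
      simp only [flat, List.getElem?_cons_succ]
      rw [ih i (by simpa using Nat.lt_of_succ_lt_succ hi)]
      simp

lemma flat_nodup (l : List (α × α))
    (hA : ∀ p ∈ l, p.1 ≠ p.2)
    (hpw : l.Pairwise (fun p q =>
      (p.1 ≠ q.1 ∧ p.1 ≠ q.2 ∧ p.2 ≠ q.1 ∧ p.2 ≠ q.2))) :
    (flat l).Nodup := by
  induction l with
  | nil => simp [flat]
  | cons p t ih =>
    obtain ⟨hp, hpw'⟩ := List.pairwise_cons.mp hpw
    simp only [flat, List.nodup_cons]
    refine ⟨?_, ?_, ih (fun q hq => hA q (List.mem_cons_of_mem _ hq)) hpw'⟩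
    · intro hmem
      rcases List.mem_cons.mp hmem with h | hmem'
      · exact hA p List.mem_cons_self h
      · obtain ⟨q, hq, h | h⟩ := mem_flat.mp hmem'
        · exact (hp q hq).1 h
        · exact (hp q hq).2.1 h
    · intro hmem
      obtain ⟨q, hq, h | h⟩ := mem_flat.mp hmem
      · exact (hp q hq).2.2.1 h
      · exact (hp q hq).2.2.2 h

end Lists

section GraphBounds
variable {V : Type*} [Fintype V] [DecidableEq V]
  (G : SimpleGraph V) [DecidableRel G.Adj]

/-- adjacency on edges: distinct and sharing a vertex -/
def EA (e f : {e : Sym2 V // e ∈ G.edgeFinset}) : Prop :=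
  (e : Sym2 V) ≠ f ∧ ∃ v : V, v ∈ (e : Sym2 V) ∧ v ∈ (f : Sym2 V)

instance : DecidableRel (EA G) := fun e f => by
  unfold EA; infer_instance

lemma EA_symm : Symmetric (EA G) := by
  rintro e f ⟨h1, v, hv1, hv2⟩
  exact ⟨h1.symm, v, hv2, hv1⟩

lemma incid_card_le (d : ℕ) (hdeg : ∀ v : V, G.degree v ≤ d) (u : V) :
    (univ.filter (fun h : {e : Sym2 V // e ∈ G.edgeFinset} => u ∈ (h : Sym2 V))).card ≤ d := by
  have hb : (univ.filter (fun h : {e : Sym2 V // e ∈ G.edgeFinset} => u ∈ (h : Sym2 V))).card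
      = (G.edgeFinset.filter (fun s => u ∈ s)).card := by
    refine Finset.card_nbij (fun h => (h : Sym2 V)) ?_ ?_ ?_
    · intro a ha
      simp only [mem_coe, mem_filter, mem_univ, true_and] at ha
      simp [ha, SimpleGraph.mem_edgeFinset.mp a.2]
    · intro a _ b _ hab
      exact Subtype.ext hab
    · intro b hb
      simp only [mem_coe, mem_filter] at hb
      exact ⟨⟨b, hb.1⟩, by simp [hb.2], rfl⟩
  rw [hb, ← SimpleGraph.incidenceFinset_eq_filter, SimpleGraph.card_incidenceFinset_eq_degree]
  exact hdeg u

lemma EA_deg_le (d : ℕ) (hdeg : ∀ v : V, G.degree v ≤ d)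
    (g : {e : Sym2 V // e ∈ G.edgeFinset}) :
    (univ.filter (fun h => EA G g h)).card ≤ 2 * d := by
  obtain ⟨u, v, huv⟩ : ∃ u v, (g : Sym2 V) = s(u, v) :=
    Sym2.ind (f := fun z => ∃ u v, z = s(u, v)) (fun x y => ⟨x, y, rfl⟩) (g : Sym2 V)
  have hsub : univ.filter (fun h => EA G g h) ⊆
      (univ.filter (fun h : {e : Sym2 V // e ∈ G.edgeFinset} => u ∈ (h : Sym2 V))) ∪
      (univ.filter (fun h : {e : Sym2 V // e ∈ G.edgeFinset} => v ∈ (h : Sym2 V))) := by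
    intro h hh
    simp only [mem_filter, mem_univ, true_and] at hh
    obtain ⟨_, w, hw1, hw2⟩ := hh
    rw [huv, Sym2.mem_iff] at hw1
    simp only [mem_union, mem_filter, mem_univ, true_and]
    rcases hw1 with rfl | rfl
    · exact Or.inl hw2
    · exact Or.inr hw2
  calc (univ.filter (fun h => EA G g h)).card ≤ _ := card_le_card hsub
    _ ≤ _ + _ := card_union_le _ _
    _ ≤ d + d := Nat.add_le_add (incid_card_le G d hdeg u) (incid_card_le G d hdeg v)
    _ = 2 * d := by ring

lemma GC_EA_card_le (d : ℕ) (hdeg : ∀ v : V, G.degree v ≤ d)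
    (e f : {e : Sym2 V // e ∈ G.edgeFinset}) (hef : EA G e f) :
    (GC (EA G) e f).card ≤ 3 * d := by
  obtain ⟨-, x, hx1, hx2⟩ := hef
  obtain ⟨y, hy⟩ := Sym2.mem_iff_exists.mp hx1
  obtain ⟨z, hz⟩ := Sym2.mem_iff_exists.mp hx2
  have hsub : GC (EA G) e f ⊆
      (univ.filter (fun h : {e : Sym2 V // e ∈ G.edgeFinset} => x ∈ (h : Sym2 V))) ∪
      (univ.filter (fun h : {e : Sym2 V // e ∈ G.edgeFinset} => y ∈ (h : Sym2 V))) ∪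
      (univ.filter (fun h : {e : Sym2 V // e ∈ G.edgeFinset} => z ∈ (h : Sym2 V))) := by
    intro h hh
    simp only [GC, mem_filter, mem_univ, true_and] at hh
    simp only [mem_union, mem_filter, mem_univ, true_and]
    rcases hh with ⟨-, w, hw1, hw2⟩ | ⟨-, w, hw1, hw2⟩
    · rw [hy, Sym2.mem_iff] at hw2
      rcases hw2 with rfl | rfl
      · exact Or.inl (Or.inl hw1)
      · exact Or.inl (Or.inr hw1)
    · rw [hz, Sym2.mem_iff] at hw2
      rcases hw2 with rfl | rfl
      · exact Or.inl (Or.inl hw1)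
      · exact Or.inr hw1
  calc (GC (EA G) e f).card ≤ _ := card_le_card hsub
    _ ≤ _ + _ := card_union_le _ _
    _ ≤ (_ + _) + _ := Nat.add_le_add_right (card_union_le _ _) _
    _ ≤ (d + d) + d := by
        refine Nat.add_le_add (Nat.add_le_add ?_ ?_) ?_ <;>
          exact incid_card_le G d hdeg _
    _ = 3 * d := by ring

end GraphBounds

/-- Lemma (good-edge ordering): let `F` be the edge set of a finite connected graph with
maximum degree at most `d`, and let `p2` be the number of two-paths of `F` (unordered
pairs of distinct edges sharing a vertex). Then there is an ordering
`σ : Fin |F| ≃ F` of the edges containing at least `⌈p2 / (6d²)⌉` good edges, where the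
`j`-th edge is good if exactly one earlier edge shares a vertex with it. -/
theorem good_edge_ordering {V : Type*} [Fintype V] [DecidableEq V]
    (G : SimpleGraph V) [DecidableRel G.Adj] (d : ℕ)
    (hconn : G.Connected) (hdeg : ∀ v : V, G.degree v ≤ d) :
    ∃ σ : Fin G.edgeFinset.card ≃ {e : Sym2 V // e ∈ G.edgeFinset},
      ⌈(((((G.edgeFinset ×ˢ G.edgeFinset).filter
              (fun q => q.1 ≠ q.2 ∧ ∃ v : V, v ∈ q.1 ∧ v ∈ q.2)).card / 2 : ℕ)) : ℚ) /
          (6 * (d : ℚ) ^ 2)⌉₊ ≤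
        (Finset.univ.filter (fun j : Fin G.edgeFinset.card =>
          (Finset.univ.filter (fun i : Fin G.edgeFinset.card =>
            i < j ∧ ∃ v : V, v ∈ (σ i : Sym2 V) ∧ v ∈ (σ j : Sym2 V))).card = 1)).card := by
  set n := G.edgeFinset.card with hn
  have hM : ∀ e f, EA G e f → (GD (EA G) e f).card ≤ 12 * d ^ 2 := by
    intro e f hef
    have h1 := GD_card_le (EA G) (EA_symm G) e f (2 * d) (EA_deg_le G d hdeg)
    have h2 := GC_EA_card_le G d hdeg e f hef
    calc (GD (EA G) e f).card ≤ 2 * ((GC (EA G) e f).card * (2 * d)) := h1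
      _ ≤ 2 * ((3 * d) * (2 * d)) :=
          Nat.mul_le_mul_left _ (Nat.mul_le_mul_right _ h2)
      _ = 12 * d ^ 2 := by ring
  set P : Finset ({e : Sym2 V // e ∈ G.edgeFinset} × {e : Sym2 V // e ∈ G.edgeFinset}) :=
    univ.filter (fun q => EA G q.1 q.2) with hPdef
  obtain ⟨l, hl1, hl2, hl3, hl4⟩ := greedy (EA G) (EA_symm G) (12 * d ^ 2) hM P
      (fun q hq => (mem_filter.mp hq).2)
  set k := l.length with hk
  set xs := flat l with hxs
  have hxslen : xs.length = 2 * k := flat_length l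
  have hxsnd : xs.Nodup := by
    apply flat_nodup l
    · intro p hp h
      exact (hl2 p hp).1 (congrArg Subtype.val h)
    · exact hl3.imp (fun h => h.2)
  set ys := xs ++ (univ \ xs.toFinset).toList with hys
  have hdisj : xs.Disjoint (univ \ xs.toFinset).toList := by
    intro a ha hb
    rw [Finset.mem_toList, mem_sdiff] at hb
    exact hb.2 (List.mem_toFinset.mpr ha)
  have hysnd : ys.Nodup := hxsnd.append (Finset.nodup_toList _) hdisj
  have hysmem : ∀ a, a ∈ ys := by
    intro a
    rw [hys, List.mem_append]
    by_cases h : a ∈ xs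
    · exact Or.inl h
    · exact Or.inr (by
        rw [Finset.mem_toList, mem_sdiff]
        exact ⟨mem_univ _, fun hc => h (List.mem_toFinset.mp hc)⟩)
  have hyslen : ys.length = n := by
    have h1 : ys.toFinset = univ :=
      eq_univ_iff_forall.mpr (fun a => List.mem_toFinset.mpr (hysmem a))
    have h2 := List.toFinset_card_of_nodup hysnd
    rw [h1] at h2
    rw [← h2, card_univ, Fintype.card_coe]
  have hxsys : xs.length ≤ n := by
    rw [← hyslen, hys, List.length_append]
    omega
  set σ0 := List.Nodup.getEquivOfForallMemList ys hysnd hysmem with hσ0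
  set σ : Fin n ≃ {e : Sym2 V // e ∈ G.edgeFinset} := (finCongr hyslen.symm).trans σ0 with hσ
  have hσval : ∀ (m : ℕ) (hm : m < n) (x : {e : Sym2 V // e ∈ G.edgeFinset}),
      xs[m]? = some x → σ ⟨m, hm⟩ = x := by
    intro m hm x hx
    have hmx : m < xs.length := by
      by_contra hc
      rw [List.getElem?_eq_none (by omega)] at hx
      exact nomatch hx
    have hmys : m < ys.length := by rw [hyslen]; exact hm
    have hyx : ys[m]? = some x := by
      rw [hys, List.getElem?_append_left hmx]; exact hx
    have hval : σ ⟨m, hm⟩ = ys.get ⟨m, hmys⟩ := by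
      simp [hσ, hσ0, List.Nodup.getEquivOfForallMemList, finCongr]
    rw [hval, List.get_eq_getElem]
    rw [List.getElem?_eq_getElem hmys] at hyx
    exact Option.some_injective _ hyx
  have hbound : ∀ i, i < k → 2 * i + 1 < n := by
    intro i hi; omega
  have hfilter : ∀ (i : ℕ) (hi : i < k),
      univ.filter (fun m : Fin n => m < (⟨2 * i + 1, hbound i hi⟩ : Fin n) ∧
        ∃ v : V, v ∈ (σ m : Sym2 V) ∧ v ∈ ((σ ⟨2 * i + 1, hbound i hi⟩ : _) : Sym2 V))
      = {(⟨2 * i, by have := hbound i hi; omega⟩ : Fin n)} := by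
    intro i hi
    have hji : σ ⟨2 * i + 1, hbound i hi⟩ = l[i].2 := hσval _ _ _ (flat_get_snd l i hi)
    have hmi : σ ⟨2 * i, by have := hbound i hi; omega⟩ = l[i].1 :=
      hσval _ _ _ (flat_get_fst l i hi)
    have hAi : EA G (l[i].1) (l[i].2) := hl2 _ (List.getElem_mem hi)
    ext m
    simp only [mem_filter, mem_univ, true_and, mem_singleton]
    constructor
    · rintro ⟨hlt, v, hv1, hv2⟩
      have hmlt : (m : ℕ) < 2 * i + 1 := hlt
      have hEA : EA G (σ m) (σ ⟨2 * i + 1, hbound i hi⟩) := by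
        refine ⟨fun hc => ?_, v, hv1, hv2⟩
        have h1 : σ m = σ ⟨2 * i + 1, hbound i hi⟩ := Subtype.ext hc
        have h3 : (m : ℕ) = 2 * i + 1 := congrArg Fin.val (σ.injective h1)
        omega
      rcases Nat.even_or_odd (m : ℕ) with ⟨c, hc⟩ | ⟨c, hc⟩
      · have hm2 : (m : ℕ) = 2 * c := by omega
        have hck : c < k := by omega
        have hσm : σ m = l[c].1 := by
          have hm3 : m = (⟨2 * c, by omega⟩ : Fin n) := Fin.ext hm2
          rw [hm3]; exact hσval _ _ _ (flat_get_fst l c hck)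
        by_cases hci : c = i
        · subst hci; exact Fin.ext hm2
        · exfalso
          have hclt : c < i := by omega
          have hsep := List.pairwise_iff_getElem.mp hl3 c i hck hi hclt
          apply hsep.1.2.1
          rw [← hσm, ← hji]; exact hEA
      · have hm2 : (m : ℕ) = 2 * c + 1 := by omega
        have hclt : c < i := by omega
        have hck : c < k := by omega
        have hσm : σ m = l[c].2 := by
          have hm3 : m = (⟨2 * c + 1, by omega⟩ : Fin n) := Fin.ext hm2
          rw [hm3]; exact hσval _ _ _ (flat_get_snd l c hck)
        exfalso
        have hsep := List.pairwise_iff_getElem.mp hl3 c i hck hi hclt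
        apply hsep.1.2.2.2
        rw [← hσm, ← hji]; exact hEA
    · rintro rfl
      refine ⟨Fin.mk_lt_mk.mpr (by omega), ?_⟩
      rw [hmi, hji]
      obtain ⟨-, v, hv1, hv2⟩ := hAi
      exact ⟨v, hv1, hv2⟩
  refine ⟨σ, ?_⟩
  have hkle : k ≤ (Finset.univ.filter (fun j : Fin n =>
      (Finset.univ.filter (fun i : Fin n =>
        i < j ∧ ∃ v : V, v ∈ (σ i : Sym2 V) ∧ v ∈ (σ j : Sym2 V))).card = 1)).card := by
    have hinj := Finset.card_le_card_of_injOn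
      (s := (univ : Finset (Fin k)))
      (t := (Finset.univ.filter (fun j : Fin n =>
        (Finset.univ.filter (fun i : Fin n =>
          i < j ∧ ∃ v : V, v ∈ (σ i : Sym2 V) ∧ v ∈ (σ j : Sym2 V))).card = 1)))
      (fun i => (⟨2 * (i : ℕ) + 1, hbound i i.2⟩ : Fin n)) ?_ ?_
    · simpa using hinj
    · intro i _
      simp only [mem_coe, mem_filter, mem_univ, true_and]
      rw [hfilter (i : ℕ) i.2]
      exact card_singleton _
    · intro a _ b _ hab
      have h1 : 2 * (a : ℕ) + 1 = 2 * (b : ℕ) + 1 := congrArg Fin.val hab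
      exact Fin.ext (by omega)
  refine le_trans ?_ hkle
  have hScard : ((G.edgeFinset ×ˢ G.edgeFinset).filter
      (fun q => q.1 ≠ q.2 ∧ ∃ v : V, v ∈ q.1 ∧ v ∈ q.2)).card = P.card := by
    refine Finset.card_bij
      (fun q hq => ((⟨q.1, (mem_product.mp (mem_filter.mp hq).1).1⟩,
                     ⟨q.2, (mem_product.mp (mem_filter.mp hq).1).2⟩) :
        {e : Sym2 V // e ∈ G.edgeFinset} × {e : Sym2 V // e ∈ G.edgeFinset})) ?_ ?_ ?_
    · intro a ha
      simp only [hPdef, mem_filter, mem_univ, true_and]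
      obtain ⟨-, h2⟩ := mem_filter.mp ha
      exact ⟨h2.1, h2.2⟩
    · intro a ha b hb hab
      have h1 := congrArg (fun r => ((r.1 : Sym2 V), (r.2 : Sym2 V))) hab
      simp only at h1
      exact Prod.ext (congrArg Prod.fst h1) (congrArg Prod.snd h1)
    · intro b hb
      simp only [hPdef, mem_filter, mem_univ, true_and] at hb
      refine ⟨((b.1 : Sym2 V), (b.2 : Sym2 V)), ?_, ?_⟩
      · rw [mem_filter, mem_product]
        exact ⟨⟨b.1.2, b.2.2⟩, hb.1, hb.2⟩
      · simp
  rcases Nat.eq_zero_or_pos d with hd0 | hdpos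
  · subst hd0
    simp
  · have hStot : ((G.edgeFinset ×ˢ G.edgeFinset).filter
        (fun q => q.1 ≠ q.2 ∧ ∃ v : V, v ∈ q.1 ∧ v ∈ q.2)).card ≤ 12 * (d ^ 2 * k) := by
      calc _ = P.card := hScard
        _ ≤ 12 * d ^ 2 * k := hl1
        _ = 12 * (d ^ 2 * k) := by ring
    have hhalf : ((G.edgeFinset ×ˢ G.edgeFinset).filter
        (fun q => q.1 ≠ q.2 ∧ ∃ v : V, v ∈ q.1 ∧ v ∈ q.2)).card / 2 ≤ 6 * (d ^ 2 * k) := by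
      omega
    rw [Nat.ceil_le]
    have hdq : (0 : ℚ) < (d : ℚ) := by exact_mod_cast hdpos
    rw [div_le_iff₀ (by positivity)]
    calc ((((G.edgeFinset ×ˢ G.edgeFinset).filter
          (fun q => q.1 ≠ q.2 ∧ ∃ v : V, v ∈ q.1 ∧ v ∈ q.2)).card / 2 : ℕ) : ℚ)
        ≤ ((6 * (d ^ 2 * k) : ℕ) : ℚ) := by exact_mod_cast hhalf
      _ = (k : ℚ) * (6 * (d : ℚ) ^ 2) := by push_cast; ring
end

section
/- Let T and R be complex square matrices of the same size such that Im(T) ⊆ Ker(R) and Im(T*) ⊆ Ker(R). Then every eigenvalue λ of T + R that is not an eigenvalue of T satisfies |λ| ≤ max over nonzero x ∈ Ker(T) of ‖(T+R)x‖ / ‖x‖, where ‖·‖ is the Euclidean norm. -/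
open Matrix

/-- Lemma (eigenvalues after subtracting the leading eigenspace): if `T, R` are complex
square matrices with `Im T ⊆ Ker R` and `Im T* ⊆ Ker R`, then every eigenvalue `λ` of
`T + R` that is not an eigenvalue of `T` satisfies
`|λ| ≤ max_{0 ≠ x ∈ Ker T} ‖(T+R)x‖ / ‖x‖` (Euclidean norms). -/
theorem eigenvalue_bound_on_kernel (N : ℕ) (T R : Matrix (Fin N) (Fin N) ℂ)
    (h1 : LinearMap.range T.mulVecLin ≤ LinearMap.ker R.mulVecLin)
    (h2 : LinearMap.range Tᴴ.mulVecLin ≤ LinearMap.ker R.mulVecLin)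
    (lam : ℂ)
    (hev : Module.End.HasEigenvalue (T + R).mulVecLin lam)
    (hnev : ¬ Module.End.HasEigenvalue T.mulVecLin lam) :
    ‖lam‖ ≤
      sSup {c : ℝ | ∃ x : EuclideanSpace ℂ (Fin N), x ≠ 0 ∧
        T.mulVec ((EuclideanSpace.equiv (Fin N) ℂ) x) = 0 ∧
        c = ‖(EuclideanSpace.equiv (Fin N) ℂ).symm
              ((T + R).mulVec ((EuclideanSpace.equiv (Fin N) ℂ) x))‖ / ‖x‖} := by
  classical
  set A : EuclideanSpace ℂ (Fin N) →ₗ[ℂ] EuclideanSpace ℂ (Fin N) :=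
    Matrix.toEuclideanLin T with hAdef
  set A' : EuclideanSpace ℂ (Fin N) →ₗ[ℂ] EuclideanSpace ℂ (Fin N) :=
    Matrix.toEuclideanLin Tᴴ with hA'def
  set B : EuclideanSpace ℂ (Fin N) →ₗ[ℂ] EuclideanSpace ℂ (Fin N) :=
    Matrix.toEuclideanLin R with hBdef
  have hCsum : Matrix.toEuclideanLin (T + R) = A + B := map_add Matrix.toEuclideanLin T R
  -- range A ≤ ker B
  have hrangeA : LinearMap.range A ≤ LinearMap.ker B := by
    rintro x ⟨y, rfl⟩
    have hm : R.mulVec (T.mulVec (WithLp.equiv 2 (Fin N → ℂ) y)) = 0 := by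
      have := h1 (LinearMap.mem_range_self T.mulVecLin (WithLp.equiv 2 (Fin N → ℂ) y))
      simpa [Matrix.mulVecLin_apply] using this
    simpa [LinearMap.mem_ker, hAdef, hBdef, Matrix.toEuclideanLin_apply] using hm
  have hrangeA' : LinearMap.range A' ≤ LinearMap.ker B := by
    rintro x ⟨y, rfl⟩
    have hm : R.mulVec (Tᴴ.mulVec (WithLp.equiv 2 (Fin N → ℂ) y)) = 0 := by
      have := h2 (LinearMap.mem_range_self Tᴴ.mulVecLin (WithLp.equiv 2 (Fin N → ℂ) y))
      simpa [Matrix.mulVecLin_apply] using this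
    simpa [LinearMap.mem_ker, hA'def, hBdef, Matrix.toEuclideanLin_apply] using hm
  set W : Submodule ℂ (EuclideanSpace ℂ (Fin N)) :=
    LinearMap.range A ⊔ LinearMap.range A' with hWdef
  have hWB : W ≤ LinearMap.ker B := sup_le hrangeA hrangeA'
  have hadj : LinearMap.adjoint A = A' := by
    rw [hAdef, hA'def, Matrix.toEuclideanLin_conjTranspose_eq_adjoint]
  -- Wᗮ ⊆ ker A
  have hkerA : ∀ x : EuclideanSpace ℂ (Fin N), x ∈ Wᗮ → A x = 0 := by
    intro x hx
    have hz : A' (A x) ∈ W := Submodule.mem_sup_right (LinearMap.mem_range_self A' (A x))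
    have h0 : (inner ℂ (A' (A x)) x : ℂ) = 0 := (Submodule.mem_orthogonal W x).mp hx _ hz
    rw [← hadj, LinearMap.adjoint_inner_left] at h0
    exact inner_self_eq_zero.mp h0
  -- eigenvector
  obtain ⟨v0, hv0⟩ := hev.exists_hasEigenvector
  have hv0eq : (T + R).mulVec v0 = lam • v0 := by
    rw [← Matrix.mulVecLin_apply]; exact hv0.apply_eq_smul
  set v : EuclideanSpace ℂ (Fin N) := (WithLp.equiv 2 (Fin N → ℂ)).symm v0 with hvdef
  have hvne : v ≠ 0 := by
    intro h
    exact hv0.right (by simpa [hvdef] using congrArg (WithLp.equiv 2 (Fin N → ℂ)) h)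
  have hCv : A v + B v = lam • v := by
    rw [← LinearMap.add_apply, ← hCsum, Matrix.toEuclideanLin_apply]
    simp [hvdef, hv0eq]
  set w : EuclideanSpace ℂ (Fin N) := (W.orthogonalProjectionOnto v : EuclideanSpace ℂ (Fin N))
    with hwdef
  have hwW : w ∈ W := (W.orthogonalProjectionOnto v).2
  set u : EuclideanSpace ℂ (Fin N) := v - w with hudef
  have huW : u ∈ Wᗮ := Submodule.sub_starProjection_mem_orthogonal (K := W) v
  have hAu : A u = 0 := hkerA u huW
  have hBw : B w = 0 := hWB hwW
  -- u ≠ 0, else lam is an eigenvalue of T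
  have hune : u ≠ 0 := by
    intro h0
    have hvw : v = w := by rwa [hudef, sub_eq_zero] at h0
    have hBv : B v = 0 := by rw [hvw]; exact hBw
    have hAv : A v = lam • v := by rw [hBv, add_zero] at hCv; exact hCv
    have hTv0 : T.mulVec v0 = lam • v0 := by
      have := congrArg (WithLp.equiv 2 (Fin N → ℂ)) hAv
      simpa [hAdef, Matrix.toEuclideanLin_apply, hvdef] using this
    exact hnev (Module.End.hasEigenvalue_of_hasEigenvector
      ⟨Module.End.mem_eigenspace_iff.mpr (by simpa [Matrix.mulVecLin_apply] using hTv0),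
        hv0.right⟩)
  -- B u = lam • u + z with z ∈ W
  have hBu : B u = lam • u + (lam • w - A w) := by
    have h1' : A w + B u = lam • v := by
      have : A v + B v = A w + B u := by
        rw [hudef]
        have hv' : v = w + u := by rw [hudef]; abel
        calc A v + B v = A (w + u) + B (w + u) := by rw [← hv']
          _ = (A w + A u) + (B w + B u) := by rw [map_add, map_add]
          _ = A w + B u := by rw [hAu, hBw]; abel
      rw [← this, hCv]
    have hv' : (lam : ℂ) • v = lam • u + lam • w := by
      rw [hudef, smul_sub]; abel
    rw [eq_sub_of_add_eq' h1', hv']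
    abel
  have hzW : lam • w - A w ∈ W := by
    refine Submodule.sub_mem W (Submodule.smul_mem W lam hwW) ?_
    exact Submodule.mem_sup_left (LinearMap.mem_range_self A w)
  -- inner product estimate
  have hinner : (inner ℂ u (B u) : ℂ) = lam * (inner ℂ u u : ℂ) := by
    have h0 : (inner ℂ u (lam • w - A w) : ℂ) = 0 := by
      have := (Submodule.mem_orthogonal W u).mp huW _ hzW
      rw [← inner_conj_symm, this, map_zero]
    rw [hBu, inner_add_right, inner_smul_right, h0, add_zero]
  have hupos : (0 : ℝ) < ‖u‖ := norm_pos_iff.mpr hune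
  have hkey : ‖lam‖ * ‖u‖ ≤ ‖B u‖ := by
    have hcs : ‖(inner ℂ u (B u) : ℂ)‖ ≤ ‖u‖ * ‖B u‖ := norm_inner_le_norm u (B u)
    have h2' : ‖(inner ℂ u (B u) : ℂ)‖ = ‖lam‖ * ‖u‖ ^ 2 := by
      rw [hinner, inner_self_eq_norm_sq_to_K, norm_mul, norm_pow]
      simp
    rw [h2'] at hcs
    nlinarith [hupos]
  -- the witness
  set c : ℝ := ‖(EuclideanSpace.equiv (Fin N) ℂ).symm
      ((T + R).mulVec ((EuclideanSpace.equiv (Fin N) ℂ) u))‖ / ‖u‖ with hcdef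
  have hTu : T.mulVec ((EuclideanSpace.equiv (Fin N) ℂ) u) = 0 := by
    have := congrArg (WithLp.equiv 2 (Fin N → ℂ)) hAu
    simp [hAdef, Matrix.toEuclideanLin_apply] at this; exact this
  have hcmem : c ∈ {c : ℝ | ∃ x : EuclideanSpace ℂ (Fin N), x ≠ 0 ∧
        T.mulVec ((EuclideanSpace.equiv (Fin N) ℂ) x) = 0 ∧
        c = ‖(EuclideanSpace.equiv (Fin N) ℂ).symm
              ((T + R).mulVec ((EuclideanSpace.equiv (Fin N) ℂ) x))‖ / ‖x‖} :=
    ⟨u, hune, hTu, rfl⟩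
  have hCu : ((EuclideanSpace.equiv (Fin N) ℂ).symm
      ((T + R).mulVec ((EuclideanSpace.equiv (Fin N) ℂ) u)) : EuclideanSpace ℂ (Fin N)) = B u := by
    have : Matrix.toEuclideanLin (T + R) u = B u := by
      rw [hCsum, LinearMap.add_apply, hAu, zero_add]
    rw [← this, Matrix.toEuclideanLin_apply]
    rfl
  have hlamc : ‖lam‖ ≤ c := by
    rw [hcdef, le_div_iff₀ hupos, hCu]
    exact hkey
  -- boundedness of the set
  set f : EuclideanSpace ℂ (Fin N) →L[ℂ] EuclideanSpace ℂ (Fin N) :=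
    LinearMap.toContinuousLinearMap (Matrix.toEuclideanLin (T + R)) with hfdef
  have hbdd : BddAbove {c : ℝ | ∃ x : EuclideanSpace ℂ (Fin N), x ≠ 0 ∧
        T.mulVec ((EuclideanSpace.equiv (Fin N) ℂ) x) = 0 ∧
        c = ‖(EuclideanSpace.equiv (Fin N) ℂ).symm
              ((T + R).mulVec ((EuclideanSpace.equiv (Fin N) ℂ) x))‖ / ‖x‖} := by
    refine ⟨‖f‖, ?_⟩
    rintro d ⟨x, hx0, -, rfl⟩
    have hx : ((EuclideanSpace.equiv (Fin N) ℂ).symm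
        ((T + R).mulVec ((EuclideanSpace.equiv (Fin N) ℂ) x)) : EuclideanSpace ℂ (Fin N))
        = f x := by
      rw [hfdef]
      simp only [LinearMap.coe_toContinuousLinearMap', Matrix.toEuclideanLin_apply]
      rfl
    rw [hx, div_le_iff₀ (norm_pos_iff.mpr hx0)]
    exact f.le_opNorm x
  exact le_trans hlamc (le_csSup hbdd hcmem)
end
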